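/- For every real t with |t| < π/2, the series ∑_{n=0}^∞ K n 1 · tⁿ/n! = ∑_{n=0}^∞ A(n+1)·tⁿ/n! converges and its sum equals 1/(1 − sin t); that is, the exponential generating function for the boundary singularities B_n^1 is K_1(t) = 1/(1 − sin t). -/

import Mathlib

/-- The Bernoulli–Euler (zigzag, up-down) numbers: `A 0 = 1`, `A 1 = 1`, and
`2 * A (n+1) = ∑ k in range (n+1), (n.choose k) * A k * A (n-k)`. -/
def A : ℕ → ℕ
  | 0 => 1
  | 1 => 1
  | n + 2 =>
      (∑ k ∈ (Finset.range (n + 2)).attach,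
        Nat.choose (n + 1) k.1 * A k.1 * A (n + 1 - k.1)) / 2
decreasing_by
  · have := Finset.mem_range.mp k.2; omega
  · have := Finset.mem_range.mp k.2; omega

/-- `K n l` : number of connected components of the space of very nice
M-morsifications of the multiboundary singularity `B_n^l`, extended by the
recurrence `K n (l+1) = K (n+2) l − (n+2)·l·K (n+2) (l−1)` for `l ≥ 1`,
with `K n 0 = A (n-1)` for `n ≥ 1`, `K n 0 = 0` for `n ≤ 0`,
and `K n 1 = K (n+2) 0`. -/
def K : ℤ → ℕ → ℤ
  | n, 0 => if 1 ≤ n then (A (n - 1).toNat : ℤ) else 0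
  | n, 1 => K (n + 2) 0
  | n, (l + 2) => K (n + 2) (l + 1) - (n + 2) * (l + 1) * K (n + 2) l

open Finset in
lemma choose_central_even (j : ℕ) : 2 ∣ Nat.choose (2*(j+1)) (j+1) := by
  have h1 : 2*(j+1) = (2*j+1)+1 := by ring
  have h2 : (2*j+1).choose j = (2*j+1).choose (j+1) := by
    have := Nat.choose_symm (n := 2*j+1) (k := j+1) (by omega)
    simpa [show 2*j+1-(j+1) = j by omega] using this
  rw [h1, Nat.choose_succ_succ, ← h2]
  omega

lemma S_even (n : ℕ) (hn : 1 ≤ n) :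
    2 ∣ ∑ k ∈ Finset.range (n+1), n.choose k * A k * A (n-k) := by
  rw [← ZMod.natCast_eq_zero_iff]
  push_cast
  refine Finset.sum_involution (fun k _ => n - k) ?_ ?_ ?_ ?_
  · intro k hk
    have hkn : k ≤ n := by simpa using Nat.lt_succ_iff.mp (Finset.mem_range.mp hk)
    have h1 : n - (n - k) = k := by omega
    have h2 : (n.choose (n-k) : ZMod 2) = (n.choose k : ZMod 2) := by
      rw [Nat.choose_symm hkn]
    rw [h1, h2]
    show ((n.choose k : ZMod 2) * (A k) * (A (n-k))) + ((n.choose k : ZMod 2) * (A (n-k)) * (A k)) = 0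
    have h20 : (2 : ZMod 2) = 0 := rfl
    ring_nf
    rw [h20, mul_zero]
  · intro k hk hne
    intro hfix
    have hfix' : n - k = k := hfix
    have hkn : k ≤ n := Nat.lt_succ_iff.mp (Finset.mem_range.mp hk)
    have hn2 : n = 2 * k := by omega
    have hk1 : 1 ≤ k := by omega
    obtain ⟨j, rfl⟩ : ∃ j, k = j + 1 := ⟨k - 1, by omega⟩
    apply hne
    have hc : ((n.choose (j+1) : ℕ) : ZMod 2) = 0 := by
      rw [ZMod.natCast_eq_zero_iff, hn2]
      exact choose_central_even j
    rw [hc]; ring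
  · intro k hk
    simp only [Finset.mem_range] at *; omega
  · intro k hk
    have hkn : k ≤ n := Nat.lt_succ_iff.mp (Finset.mem_range.mp hk)
    show n - (n - k) = k
    omega
noncomputable def Fc : ℂ → ℂ := fun z => (1 + Complex.sin z) / Complex.cos z
noncomputable def Gc : ℂ → ℂ := fun z => (1 - Complex.sin z)⁻¹

lemma half_pi_le (m : ℤ) (hm : m ≠ 0) : Real.pi/2 ≤ |(m:ℝ) * (Real.pi/2)| := by
  rw [abs_mul, abs_of_pos (by positivity : (0:ℝ) < Real.pi/2)]
  have h1 : (1:ℝ) ≤ |(m:ℝ)| := by exact_mod_cast Int.one_le_abs hm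
  nlinarith [Real.pi_pos]

lemma cos_ne_of (z : ℂ) (hz : ‖z‖ < Real.pi/2) : Complex.cos z ≠ 0 := by
  intro h
  rw [Complex.cos_eq_zero_iff] at h
  obtain ⟨k, rfl⟩ := h
  have he : ((2*(k:ℂ)+1) * (Real.pi:ℂ) / 2) = ((((2*k+1 : ℤ) : ℝ) * (Real.pi/2) : ℝ) : ℂ) := by
    push_cast; ring
  rw [he, Complex.norm_real, Real.norm_eq_abs] at hz
  exact absurd hz (not_lt.mpr (half_pi_le _ (by omega)))

lemma one_sub_sin_ne (z : ℂ) (hz : ‖z‖ < Real.pi/2) : (1:ℂ) - Complex.sin z ≠ 0 := by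
  intro h
  have h1 : Complex.sin z = 1 := by linear_combination -h
  rw [Complex.sin_eq_one_iff] at h1
  obtain ⟨k, hk⟩ := h1
  rw [← hk] at hz
  have he : ((Real.pi:ℂ)/2 + (k:ℂ) * (2*(Real.pi:ℂ))) = ((((4*k+1 : ℤ) : ℝ) * (Real.pi/2) : ℝ) : ℂ) := by
    push_cast; ring
  rw [he, Complex.norm_real, Real.norm_eq_abs] at hz
  exact absurd hz (not_lt.mpr (half_pi_le _ (by omega)))

lemma hasDerivAt_Fc (z : ℂ) (hz : ‖z‖ < Real.pi/2) : HasDerivAt Fc (Gc z) z := by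
  have hc := cos_ne_of z hz
  have hs := one_sub_sin_ne z hz
  have h1 : HasDerivAt (fun z => 1 + Complex.sin z) (Complex.cos z) z :=
    (Complex.hasDerivAt_sin z).const_add 1
  have h2 : HasDerivAt Complex.cos (-Complex.sin z) z := Complex.hasDerivAt_cos z
  have h3 := h1.fun_div h2 hc
  refine h3.congr_deriv ?_
  symm
  have hpy := Complex.sin_sq_add_cos_sq z
  simp only [Gc]
  field_simp
  ring_nf
  linear_combination (Complex.sin z) * hpy

lemma Fc_mul_Fc (z : ℂ) (hz : ‖z‖ < Real.pi/2) : Fc z * Fc z = -1 + 2 * Gc z := by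
  have hc := cos_ne_of z hz
  have hs := one_sub_sin_ne z hz
  have hpy := Complex.sin_sq_add_cos_sq z
  simp only [Fc, Gc]
  field_simp
  ring_nf
  linear_combination (-1 - Complex.sin z) * hpy
section iD
variable {U : Set ℂ} {f g : ℂ → ℂ} {x : ℂ}

lemma itdW_eq (hU : IsOpen U) (hx : x ∈ U) (n : ℕ) (f : ℂ → ℂ) :
    iteratedDerivWithin n f U x = iteratedDeriv n f x := by
  rw [iteratedDerivWithin_eq_iteratedFDerivWithin, iteratedDeriv_eq_iteratedFDeriv,
    iteratedFDerivWithin_of_isOpen n hU hx]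

lemma iD_add (hU : IsOpen U) (hf : AnalyticOnNhd ℂ f U) (hg : AnalyticOnNhd ℂ g U)
    (hx : x ∈ U) (n : ℕ) :
    iteratedDeriv n (fun z => f z + g z) x = iteratedDeriv n f x + iteratedDeriv n g x := by
  rw [← itdW_eq hU hx, ← itdW_eq hU hx, ← itdW_eq hU hx]
  exact iteratedDerivWithin_fun_add hx hU.uniqueDiffOn
    ((hf.contDiffOn hU.uniqueDiffOn) x hx) ((hg.contDiffOn hU.uniqueDiffOn) x hx)

lemma iD_const_add_mul (hU : IsOpen U) (hg : AnalyticOnNhd ℂ g U) (hx : x ∈ U)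
    (n : ℕ) (hn : 0 < n) (c a : ℂ) :
    iteratedDeriv n (fun z => c + a * g z) x = a * iteratedDeriv n g x := by
  rw [← itdW_eq hU hx, ← itdW_eq hU hx,
    iteratedDerivWithin_const_add (f := fun z => a * g z) hn c,
    iteratedDerivWithin_const_mul hx hU.uniqueDiffOn a ((hg.contDiffOn hU.uniqueDiffOn) x hx)]

lemma binom_conv (a b : ℕ → ℂ) (n : ℕ) :
    ∑ k ∈ Finset.range (n+2), (((n+1).choose k : ℕ) : ℂ) * a k * b (n+1-k)
    = (∑ k ∈ Finset.range (n+1), ((n.choose k : ℕ) : ℂ) * a (k+1) * b (n-k))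
    + ∑ k ∈ Finset.range (n+1), ((n.choose k : ℕ) : ℂ) * a k * b (n+1-k) := by
  rw [Finset.sum_range_succ' _ (n+1)]
  have h1 : ∀ i ∈ Finset.range (n+1),
      (((n+1).choose (i+1) : ℕ) : ℂ) * a (i+1) * b (n+1-(i+1))
      = ((n.choose i : ℕ) : ℂ) * a (i+1) * b (n-i)
        + ((n.choose (i+1) : ℕ) : ℂ) * a (i+1) * b (n-i) := by
    intro i hi
    rw [Nat.choose_succ_succ]
    have h2 : n+1-(i+1) = n-i := by omega
    rw [h2]; push_cast; ring
  rw [Finset.sum_congr rfl h1, Finset.sum_add_distrib]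
  rw [Finset.sum_range_succ' (fun k => ((n.choose k : ℕ) : ℂ) * a k * b (n+1-k)) n]
  rw [Finset.sum_range_succ (fun i => ((n.choose (i+1) : ℕ) : ℂ) * a (i+1) * b (n-i)) n]
  have h3 : ∀ i ∈ Finset.range n,
      ((n.choose (i+1) : ℕ) : ℂ) * a (i+1) * b (n+1-(i+1))
      = ((n.choose (i+1) : ℕ) : ℂ) * a (i+1) * b (n-i) := by
    intro i hi; rw [show n+1-(i+1) = n-i by omega]
  rw [Finset.sum_congr rfl h3]
  simp [Nat.choose_succ_self]
  ring

lemma iD_leibniz (hU : IsOpen U) : ∀ (n : ℕ) (f g : ℂ → ℂ),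
    AnalyticOnNhd ℂ f U → AnalyticOnNhd ℂ g U → ∀ x ∈ U,
    iteratedDeriv n (fun z => f z * g z) x
      = ∑ k ∈ Finset.range (n+1), ((n.choose k : ℕ) : ℂ)
          * iteratedDeriv k f x * iteratedDeriv (n-k) g x := by
  intro n
  induction n with
  | zero => intro f g hf hg x hx; simp
  | succ n ih =>
    intro f g hf hg x hx
    have hf' : AnalyticOnNhd ℂ (deriv f) U := hf.deriv
    have hg' : AnalyticOnNhd ℂ (deriv g) U := hg.deriv
    have h1 : Set.EqOn (deriv fun z => f z * g z)
        (fun z => deriv f z * g z + f z * deriv g z) U := by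
      intro y hy
      exact deriv_mul ((hf y hy).differentiableAt) ((hg y hy).differentiableAt)
    rw [iteratedDeriv_succ', h1.iteratedDeriv_of_isOpen hU n hx,
      iD_add hU (hf'.mul hg) (hf.mul hg') hx n, ih _ _ hf' hg x hx, ih _ _ hf hg' x hx]
    have e1 : ∀ k, iteratedDeriv k (deriv f) x = iteratedDeriv (k+1) f x := by
      intro k; rw [iteratedDeriv_succ']
    have e1g : ∀ k, iteratedDeriv k (deriv g) x = iteratedDeriv (k+1) g x := by
      intro k; rw [iteratedDeriv_succ']
    have e2 : ∀ k ∈ Finset.range (n+1),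
        ((n.choose k : ℕ) : ℂ) * iteratedDeriv k f x * iteratedDeriv (n-k) (deriv g) x
        = ((n.choose k : ℕ) : ℂ) * iteratedDeriv k f x * iteratedDeriv (n+1-k) g x := by
      intro k hk
      rw [e1g (n-k), show n-k+1 = n+1-k by
        have := Finset.mem_range.mp hk; omega]
    simp only [e1]
    rw [Finset.sum_congr rfl e2, binom_conv (fun k => iteratedDeriv k f x)
      (fun k => iteratedDeriv k g x) n]
end iD
open Real

lemma mem_U_iff (z : ℂ) : z ∈ Metric.ball (0:ℂ) (π/2) ↔ ‖z‖ < π/2 := by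
  rw [Metric.mem_ball, dist_zero_right]

lemma zero_mem_U : (0:ℂ) ∈ Metric.ball (0:ℂ) (π/2) := by
  rw [mem_U_iff, norm_zero]; exact pi_div_two_pos

lemma analyticFc : AnalyticOnNhd ℂ Fc (Metric.ball (0:ℂ) (π/2)) := by
  apply DifferentiableOn.analyticOnNhd _ Metric.isOpen_ball
  apply DifferentiableOn.div
  · exact Differentiable.differentiableOn (by fun_prop)
  · exact Differentiable.differentiableOn (by fun_prop)
  · intro z hz; exact cos_ne_of z ((mem_U_iff z).mp hz)

lemma analyticGc : AnalyticOnNhd ℂ Gc (Metric.ball (0:ℂ) (π/2)) := by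
  apply DifferentiableOn.analyticOnNhd _ Metric.isOpen_ball
  apply DifferentiableOn.inv
  · exact Differentiable.differentiableOn (by fun_prop)
  · intro z hz; exact one_sub_sin_ne z ((mem_U_iff z).mp hz)

noncomputable def bc : ℕ → ℂ := fun n => iteratedDeriv n Fc 0

lemma iD_Gc (n : ℕ) : iteratedDeriv n Gc 0 = bc (n+1) := by
  have hEq : Set.EqOn (deriv Fc) Gc (Metric.ball (0:ℂ) (π/2)) := fun y hy =>
    (hasDerivAt_Fc y ((mem_U_iff y).mp hy)).deriv
  rw [bc, iteratedDeriv_succ']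
  exact (hEq.iteratedDeriv_of_isOpen Metric.isOpen_ball n zero_mem_U).symm

lemma bc0 : bc 0 = 1 := by
  simp [bc, Fc]

lemma bc1 : bc 1 = 1 := by
  rw [← iD_Gc 0]; simp [Gc]

lemma bc_rec (n : ℕ) (hn : 1 ≤ n) :
    2 * bc (n+1) = ∑ k ∈ Finset.range (n+1), ((n.choose k : ℕ) : ℂ) * bc k * bc (n-k) := by
  have hL := iD_leibniz Metric.isOpen_ball n Fc Fc analyticFc analyticFc 0 zero_mem_U
  have hEq : Set.EqOn (fun z => Fc z * Fc z) (fun z => (-1:ℂ) + 2 * Gc z)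
      (Metric.ball (0:ℂ) (π/2)) := fun y hy => Fc_mul_Fc y ((mem_U_iff y).mp hy)
  rw [hEq.iteratedDeriv_of_isOpen Metric.isOpen_ball n zero_mem_U,
    iD_const_add_mul Metric.isOpen_ball analyticGc zero_mem_U n hn, iD_Gc n] at hL
  exact hL

lemma A_eq_bc : ∀ n, ((A n : ℕ) : ℂ) = bc n := by
  intro n
  induction n using Nat.strong_induction_on with
  | _ n ih =>
    match n with
    | 0 => rw [bc0]; simp [A]
    | 1 => rw [bc1]; simp [A]
    | (m+2) =>
      have hrec := bc_rec (m+1) (by omega)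
      have hS : ∑ k ∈ Finset.range (m+2), (((m+1).choose k : ℕ) : ℂ) * bc k * bc (m+1-k)
          = ((∑ k ∈ Finset.range (m+2), (m+1).choose k * A k * A (m+1-k) : ℕ) : ℂ) := by
        push_cast
        refine Finset.sum_congr rfl ?_
        intro k hk
        have hk' := Finset.mem_range.mp hk
        rw [← ih k (by omega), ← ih (m+1-k) (by omega)]
      rw [hS] at hrec
      have hA : A (m+2) = (∑ k ∈ Finset.range (m+2), (m+1).choose k * A k * A (m+1-k)) / 2 := by
        rw [A]
        congr 1
        exact Finset.sum_attach (Finset.range (m+2)) (fun k => (m+1).choose k * A k * A (m+1-k))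
      obtain ⟨c, hc⟩ := S_even (m+1) (by omega)
      rw [hA, hc, Nat.mul_div_cancel_left c (by norm_num)]
      rw [hc] at hrec
      push_cast at hrec ⊢
      linear_combination -hrec / 2

lemma iD_Gc_eq_A (n : ℕ) : iteratedDeriv n Gc 0 = ((A (n+1) : ℕ) : ℂ) := by
  rw [iD_Gc, A_eq_bc]

open Real in
/-- The exponential generating function for the boundary singularities `B_n^1`:
for `|t| < π/2`, `∑ K n 1 · tⁿ/n! = ∑ A(n+1)·tⁿ/n! = 1/(1 − sin t)`. -/
theorem egf_K_one (t : ℝ) (ht : |t| < π / 2) :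
    (∀ n : ℕ, K n 1 = (A (n + 1) : ℤ)) ∧
    HasSum (fun n : ℕ => (K n 1 : ℝ) * t ^ n / n.factorial)
      (1 / (1 - Real.sin t)) := by
  have part1 : ∀ n : ℕ, K n 1 = (A (n + 1) : ℤ) := by
    intro n
    have htn : ((n:ℤ)+2-1).toNat = n+1 := by omega
    simp only [K]
    rw [if_pos (by omega), htn]
  refine ⟨part1, ?_⟩
  set r : ℝ := (|t| + π/2)/2 with hrdef
  have hpi := pi_div_two_pos
  have hr0 : 0 < r := by rw [hrdef]; positivity
  have htr : |t| < r := by rw [hrdef]; linarith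
  have hrp : r < π/2 := by rw [hrdef]; linarith
  have hcoe : (r.toNNReal : ℝ) = r := Real.coe_toNNReal r hr0.le
  have hGdiff : DifferentiableOn ℂ Gc (Metric.closedBall (0:ℂ) (r.toNNReal : ℝ)) := by
    apply DifferentiableOn.inv
    · exact Differentiable.differentiableOn (by fun_prop)
    · intro z hz
      apply one_sub_sin_ne
      have hz' := Metric.mem_closedBall.mp hz
      rw [dist_zero_right] at hz'
      rw [hcoe] at hz'
      linarith
  have hps := hGdiff.hasFPowerSeriesOnBall (Real.toNNReal_pos.mpr hr0)
  have hmem : (t:ℂ) ∈ Metric.eball (0:ℂ) ((r.toNNReal : ENNReal)) := by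
    rw [Metric.mem_eball, edist_zero_right, enorm_eq_nnnorm, ENNReal.coe_lt_coe, ← NNReal.coe_lt_coe, hcoe,
      coe_nnnorm, Complex.norm_real, Real.norm_eq_abs]
    exact htr
  have hsum := hps.hasSum_iteratedFDeriv hmem
  have hterm : ∀ n : ℕ, ((n.factorial : ℂ))⁻¹ • iteratedFDeriv ℂ n Gc 0 (fun _ => (t:ℂ))
      = ((((A (n+1) : ℝ) * t^n / n.factorial : ℝ)) : ℂ) := by
    intro n
    rw [iteratedFDeriv_apply_eq_iteratedDeriv_mul_prod, iD_Gc_eq_A]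
    simp only [smul_eq_mul, Finset.prod_const, Finset.card_univ, Fintype.card_fin]
    push_cast
    ring
  simp only [hterm] at hsum
  have hval : Gc (0 + (t:ℂ)) = (((1/(1 - Real.sin t)) : ℝ) : ℂ) := by
    rw [zero_add]
    simp only [Gc, ← Complex.ofReal_sin]
    push_cast
    rw [one_div]
  rw [hval] at hsum
  have hre := hsum.mapL Complex.reCLM
  simp only [Complex.reCLM_apply, Complex.ofReal_re] at hre
  convert hre using 2 with n
  rw [part1 n]
  push_cast
  ring
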